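/- Let ρ(φ) = [[cos²φ, sinφ cosφ, 0],[sinφ cosφ, sin²φ, 0],[0,0,1]] and U(x₁,x₂,φ) = c₁(1−cos x₁) + c₂(1−cos x₂) + c_φ(1−cos φ) with c₁, c₂, c_φ ≠ 0. Then the set {(x₁,x₂,φ) ∈ (ℝ/2πℤ)³ : ρ(φ)ᵀ ∇U(x₁,x₂,φ) = 0} equals the union of the four circles {x₁ = a, φ = b, x₂ arbitrary} for a, b ∈ {0, π}. -/
import Mathlib


/-- on the torus `(ℝ/2πℤ)³` the critical set
`{(x₁,x₂,φ) : ρ(φ)ᵀ ∇U(x₁,x₂,φ) = 0}` of the constrained disc system, with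
`∇U = (c₁ sin x₁, c₂ sin x₂, c_φ sin φ)` and `ρ(φ)` the given projection matrix,
equals the union of the four circles `{x₁ = a, φ = b}`, `a, b ∈ {0, π}`. -/
theorem stmt_18 (c1 c2 cphi : ℝ) (hc1 : c1 ≠ 0) (hc2 : c2 ≠ 0) (hcphi : cphi ≠ 0) :
    {p : Real.Angle × Real.Angle × Real.Angle |
        (p.2.2.cos ^ 2 * (c1 * p.1.sin) + p.2.2.sin * p.2.2.cos * (c2 * p.2.1.sin) = 0) ∧
        (p.2.2.sin * p.2.2.cos * (c1 * p.1.sin) + p.2.2.sin ^ 2 * (c2 * p.2.1.sin) = 0) ∧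
        (cphi * p.2.2.sin = 0)} =
      ⋃ a ∈ ({(0 : Real.Angle), ((Real.pi : ℝ) : Real.Angle)} : Set Real.Angle),
        ⋃ b ∈ ({(0 : Real.Angle), ((Real.pi : ℝ) : Real.Angle)} : Set Real.Angle),
          {p : Real.Angle × Real.Angle × Real.Angle | p.1 = a ∧ p.2.2 = b} := by
  ext p
  simp only [Set.mem_setOf_eq, Set.mem_iUnion, Set.mem_insert_iff, Set.mem_singleton_iff,
    exists_prop]
  constructor
  · rintro ⟨h1, _h2, h3⟩
    have hs : p.2.2.sin = 0 := by
      rcases mul_eq_zero.mp h3 with h | h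
      · exact absurd h hcphi
      · exact h
    have hb : p.2.2 = 0 ∨ p.2.2 = ((Real.pi : ℝ) : Real.Angle) :=
      Real.Angle.sin_eq_zero_iff.mp hs
    have hcos2 : p.2.2.cos ^ 2 = 1 := by
      rcases hb with h | h <;> simp [h, Real.Angle.cos_coe]
    rw [hs, hcos2] at h1
    have hsx : p.1.sin = 0 := by
      have := h1
      ring_nf at this
      rcases mul_eq_zero.mp (by linarith [this] : c1 * p.1.sin = 0) with h | h
      · exact absurd h hc1
      · exact h
    have ha : p.1 = 0 ∨ p.1 = ((Real.pi : ℝ) : Real.Angle) :=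
      Real.Angle.sin_eq_zero_iff.mp hsx
    exact ⟨p.1, ha, p.2.2, hb, rfl, rfl⟩
  · rintro ⟨a, ha, b, hb, h1, h2⟩
    have hsa : p.1.sin = 0 := by
      rcases ha with h | h <;> simp [h1, h]
    have hsb : p.2.2.sin = 0 := by
      rcases hb with h | h <;> simp [h2, h]
    refine ⟨?_, ?_, ?_⟩ <;> simp [hsa, hsb]
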